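/- In a residuated lattice, the lattice of principal filters is Boolean if and only if for every element a there exists b ∈ a^⊥ such that a ⊙ b is nilpotent. -/
import Mathlib


/-- A (bounded, integral, commutative) residuated lattice. -/
class ResLattice (A : Type*) extends Lattice A, CommMonoid A, OrderBot A where
  himp : A → A → A
  adjunction : ∀ x y z : A, x * y ≤ z ↔ x ≤ himp y z
  le_one : ∀ x : A, x ≤ 1

variable {A : Type*} [ResLattice A]

/-- Coannihilator of a subset: `X^⊥ = {a | a ⊔ x = 1 for all x ∈ X}`. -/
def Coann (X : Set A) : Set A := {a | ∀ x ∈ X, a ⊔ x = 1}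

/-- Coannulet of an element: `x^⊥`. -/
def rperp (x : A) : Set A := Coann {x}

/-- The principal filter generated by `x`. -/
def PFil (x : A) : Set A := {a | ∃ n : ℕ, 0 < n ∧ x ^ n ≤ a}

/-- Filters of a residuated lattice. -/
def IsRLFilter (F : Set A) : Prop :=
  F.Nonempty ∧ (∀ x ∈ F, ∀ y ∈ F, x * y ∈ F) ∧ (∀ x ∈ F, ∀ y : A, x ⊔ y ∈ F)

/-- Prime filters. -/
def IsRLPrime (P : Set A) : Prop :=
  IsRLFilter P ∧ P ≠ Set.univ ∧ ∀ x y : A, x ⊔ y ∈ P → x ∈ P ∨ y ∈ P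

/-- Minimal prime filters. -/
def IsRLMinPrime (P : Set A) : Prop :=
  IsRLPrime P ∧ ∀ Q : Set A, IsRLPrime Q → Q ⊆ P → Q = P

/-- Quasicomplemented residuated lattice. -/
def Quasicomplemented (A : Type*) [ResLattice A] : Prop :=
  ∀ x : A, ∃ y : A, Coann (rperp x) = rperp y

/-- α-filters. -/
def IsAlphaFilter (F : Set A) : Prop :=
  IsRLFilter F ∧ ∀ x ∈ F, Coann (rperp x) ⊆ F

/-- The α-filter generated by a subset. -/
def alphaGen (X : Set A) : Set A := ⋂₀ {G : Set A | IsAlphaFilter G ∧ X ⊆ G}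

lemma Res.mul_le_mul_left (x : A) {y z : A} (h : y ≤ z) : x * y ≤ x * z := by
  rw [mul_comm, ResLattice.adjunction]
  exact h.trans (by rw [← ResLattice.adjunction, mul_comm])

lemma Res.mul_le_mul {a b c d : A} (h1 : a ≤ b) (h2 : c ≤ d) : a * c ≤ b * d :=
  (Res.mul_le_mul_left a h2).trans
    (by rw [mul_comm a d, mul_comm b d]; exact Res.mul_le_mul_left d h1)

lemma Res.mul_sup (x y z : A) : x * (y ⊔ z) = x * y ⊔ x * z := by
  apply le_antisymm
  · rw [mul_comm, ResLattice.adjunction]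
    exact sup_le (by rw [← ResLattice.adjunction, mul_comm]; exact le_sup_left)
      (by rw [← ResLattice.adjunction, mul_comm]; exact le_sup_right)
  · exact sup_le (Res.mul_le_mul_left x le_sup_left) (Res.mul_le_mul_left x le_sup_right)

lemma Res.sup_mul (x y z : A) : (x ⊔ y) * z = x * z ⊔ y * z := by
  rw [mul_comm, Res.mul_sup, mul_comm z x, mul_comm z y]

lemma Res.pow_le_pow {x y : A} (h : x ≤ y) : ∀ n : ℕ, x ^ n ≤ y ^ n := by
  intro n
  induction n with
  | zero => simp
  | succ n ih => rw [pow_succ, pow_succ]; exact Res.mul_le_mul ih h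

lemma Res.mul_le_right (x y : A) : x * y ≤ y := by
  calc x * y ≤ 1 * y := Res.mul_le_mul (ResLattice.le_one x) le_rfl
  _ = y := one_mul y

lemma Res.key (x y : A) : ∀ n m : ℕ, (x ⊔ y) ^ (n + m) ≤ x ^ n ⊔ y ^ m := by
  intro n
  induction n with
  | zero =>
    intro m
    exact le_sup_of_le_left (by simpa using ResLattice.le_one ((x ⊔ y) ^ m))
  | succ n ih =>
    intro m
    induction m with
    | zero => exact le_sup_of_le_right (by simpa using ResLattice.le_one ((x ⊔ y) ^ (n + 1)))
    | succ m ihm =>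
      have e : (x ⊔ y) ^ (n + 1 + (m + 1)) = (x ⊔ y) * (x ⊔ y) ^ (n + (m + 1)) := by
        rw [← pow_succ']; ring_nf
      rw [e, Res.sup_mul]
      apply sup_le
      · calc x * (x ⊔ y) ^ (n + (m + 1)) ≤ x * (x ^ n ⊔ y ^ (m + 1)) :=
              Res.mul_le_mul_left x (ih (m + 1))
        _ = x * x ^ n ⊔ x * y ^ (m + 1) := Res.mul_sup _ _ _
        _ ≤ x ^ (n + 1) ⊔ y ^ (m + 1) := by
            apply sup_le
            · rw [← pow_succ']; exact le_sup_left
            · exact le_sup_of_le_right (Res.mul_le_right _ _)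
      · have e2 : n + (m + 1) = n + 1 + m := by ring
        calc y * (x ⊔ y) ^ (n + (m + 1)) ≤ y * (x ^ (n + 1) ⊔ y ^ m) := by
              rw [e2]; exact Res.mul_le_mul_left y ihm
        _ = y * x ^ (n + 1) ⊔ y * y ^ m := Res.mul_sup _ _ _
        _ ≤ x ^ (n + 1) ⊔ y ^ (m + 1) := by
            apply sup_le
            · exact le_sup_of_le_left (Res.mul_le_right _ _)
            · rw [← pow_succ']; exact le_sup_right

lemma Res.PFil_sup (x y : A) : PFil (x ⊔ y) = PFil x ∩ PFil y := by
  ext a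
  constructor
  · rintro ⟨k, hk, hle⟩
    exact ⟨⟨k, hk, (Res.pow_le_pow le_sup_left k).trans hle⟩,
      ⟨k, hk, (Res.pow_le_pow le_sup_right k).trans hle⟩⟩
  · rintro ⟨⟨n, hn, hna⟩, ⟨m, hm, hma⟩⟩
    exact ⟨n + m, by omega, (Res.key x y n m).trans (sup_le hna hma)⟩

lemma Res.PFil_one : PFil (1 : A) = {1} := by
  ext a
  simp only [PFil, Set.mem_setOf_eq, one_pow, Set.mem_singleton_iff]
  constructor
  · rintro ⟨n, _, h⟩; exact le_antisymm (ResLattice.le_one a) h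
  · rintro rfl; exact ⟨1, one_pos, le_rfl⟩

theorem stmt9 :
    ((∀ x y z : A, PFil (x * (y ⊔ z)) = PFil (x * y) ∩ PFil (x * z)) ∧
      ∀ x : A, ∃ y : A, PFil x ∩ PFil y = {1} ∧ PFil (x * y) = Set.univ) ↔
      ∀ a : A, ∃ b : A, b ⊔ a = 1 ∧ ∃ n : ℕ, 0 < n ∧ (a * b) ^ n = ⊥ := by
  constructor
  · rintro ⟨_, h2⟩ a
    obtain ⟨y, hy1, hy2⟩ := h2 a
    refine ⟨y, ?_, ?_⟩
    · have hmem : y ⊔ a ∈ PFil a ∩ PFil y :=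
        ⟨⟨1, one_pos, by simpa using le_sup_right⟩, ⟨1, one_pos, by simpa using le_sup_left⟩⟩
      rw [hy1] at hmem
      exact hmem
    · have hbot : (⊥ : A) ∈ PFil (a * y) := hy2 ▸ Set.mem_univ _
      obtain ⟨n, hn, hle⟩ := hbot
      exact ⟨n, hn, le_antisymm hle bot_le⟩
  · intro h
    constructor
    · intro x y z
      rw [Res.mul_sup, Res.PFil_sup]
    · intro x
      obtain ⟨b, hb, n, hn, hnil⟩ := h x
      refine ⟨b, ?_, ?_⟩
      · rw [← Res.PFil_sup, sup_comm x b, hb, Res.PFil_one]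
      · ext a
        simp only [Set.mem_univ, iff_true]
        exact ⟨n, hn, hnil ▸ bot_le⟩
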